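/- The vacuum value of the modified Hamiltonian H[cos²] is exactly (1/2)(cot(3π/N) − 3cot(π/N)) with N = 2L, and it has the asymptotics −4N/(3π) + o(1/N): for every integer L ≥ 1, −2 Σ_{m=1}^{L−1} sin³(mπ/L) = (1/2)( cot(3π/N) − 3 cot(π/N) ), and lim_{N→∞} N·( (1/2)(cot(3π/N) − 3cot(π/N)) + 4N/(3π) ) = 0 (limit over real N → ∞; note the N-linear contribution cancels in this combination). -/

import Mathlib

open Real Filter

lemma tel (θ : ℝ) (L : ℕ) :
    (∑ m ∈ Finset.range L, Real.sin (m * θ)) * (2 * Real.sin (θ / 2))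
      = Real.cos (θ / 2) - Real.cos ((L - 1/2) * θ) := by
  induction L with
  | zero => simp; ring_nf
  | succ n ih =>
    rw [Finset.sum_range_succ, add_mul, ih]
    have h : Real.cos ((n - 1/2) * θ) - Real.cos (((n:ℝ) + 1 - 1/2) * θ)
        = Real.sin (n * θ) * (2 * Real.sin (θ / 2)) := by
      rw [Real.cos_sub_cos]
      have : θ * (-1/2) = -(θ * (1/2)) := by ring
      ring_nf
      rw [this, Real.sin_neg]
      ring
    push_cast
    linarith [h]

lemma sum1 (L : ℕ) (hL : 1 ≤ L) :
    ∑ m ∈ Finset.range L, Real.sin (m * (Real.pi / L)) = Real.cot (Real.pi / (2 * L)) := by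
  have hL0 : (L:ℝ) ≠ 0 := Nat.cast_ne_zero.mpr (by omega)
  have hL1 : (1:ℝ) ≤ (L:ℝ) := by exact_mod_cast hL
  have h := tel (Real.pi / L) L
  have e1 : (Real.pi / L) / 2 = Real.pi / (2 * L) := by ring
  have e2 : ((L:ℝ) - 1/2) * (Real.pi / L) = Real.pi - Real.pi / (2 * L) := by
    field_simp
  rw [e1, e2, Real.cos_pi_sub] at h
  have hs : Real.sin (Real.pi / (2 * L)) ≠ 0 := by
    apply ne_of_gt
    apply Real.sin_pos_of_pos_of_lt_pi
    · positivity
    · rw [div_lt_iff₀ (by positivity)]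
      nlinarith [Real.pi_pos]
  rw [Real.cot_eq_cos_div_sin, eq_div_iff hs]
  linarith

lemma sum3 (L : ℕ) (hL : 1 ≤ L) :
    ∑ m ∈ Finset.range L, Real.sin (m * (3 * Real.pi / L))
      = Real.cot (3 * Real.pi / (2 * L)) := by
  have hL0 : (L:ℝ) ≠ 0 := Nat.cast_ne_zero.mpr (by omega)
  have hL1 : (1:ℝ) ≤ (L:ℝ) := by exact_mod_cast hL
  have h := tel (3 * Real.pi / L) L
  have e1 : (3 * Real.pi / L) / 2 = 3 * Real.pi / (2 * L) := by ring
  have e2 : ((L:ℝ) - 1/2) * (3 * Real.pi / L)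
      = (Real.pi - 3 * Real.pi / (2 * L)) + 2 * Real.pi := by
    field_simp; ring
  rw [e1, e2, Real.cos_add_two_pi, Real.cos_pi_sub] at h
  have hs : Real.sin (3 * Real.pi / (2 * L)) ≠ 0 := by
    rcases eq_or_lt_of_le hL with hE | hE
    · have : 3 * Real.pi / (2 * (L:ℝ)) = Real.pi / 2 + Real.pi := by
        rw [← hE]; push_cast; ring
      rw [this, Real.sin_add_pi, Real.sin_pi_div_two]
      norm_num
    · apply ne_of_gt
      apply Real.sin_pos_of_pos_of_lt_pi
      · positivity
      · have hL2 : (2:ℝ) ≤ (L:ℝ) := by exact_mod_cast hE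
        rw [div_lt_iff₀ (by positivity)]
        nlinarith [Real.pi_pos]
  rw [Real.cot_eq_cos_div_sin, eq_div_iff hs]
  linarith

lemma part1 (L : ℕ) (hL : 1 ≤ L) :
    -2 * ∑ m ∈ Finset.Ico 1 L, (Real.sin (m * Real.pi / L)) ^ 3 =
      (1/2) * (Real.cot (3 * Real.pi / (2 * L)) - 3 * Real.cot (Real.pi / (2 * L))) := by
  have hL0 : (L:ℝ) ≠ 0 := Nat.cast_ne_zero.mpr (by omega)
  have key : ∑ m ∈ Finset.range L, (Real.sin (m * (Real.pi / L))) ^ 3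
      = ∑ m ∈ Finset.Ico 1 L, (Real.sin (m * Real.pi / L)) ^ 3 := by
    rw [Finset.range_eq_Ico, Finset.sum_eq_sum_Ico_succ_bot (show 0 < L by omega)]
    simp [mul_div_assoc]
  rw [← key]
  have hterm : ∀ m ∈ Finset.range L, (Real.sin (m * (Real.pi / L))) ^ 3
      = 3/4 * Real.sin (m * (Real.pi / L)) - 1/4 * Real.sin (m * (3 * Real.pi / L)) := by
    intro m _
    have h3 := Real.sin_three_mul (m * (Real.pi / L))
    have harg : 3 * ((m:ℝ) * (Real.pi / L)) = m * (3 * Real.pi / L) := by ring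
    rw [harg] at h3
    linarith
  rw [Finset.sum_congr rfl hterm, Finset.sum_sub_distrib, ← Finset.mul_sum, ← Finset.mul_sum,
    sum1 L hL, sum3 L hL]
  ring

lemma Dbound (x : ℝ) (h0 : 0 < x) (h1 : x ≤ 1/4) :
    |Real.sin (3*x) - 3*x*(Real.cos x)^3| ≤ 6*x^4 := by
  have hx : |x| ≤ 1 := by rw [abs_of_pos h0]; linarith
  have hx3 : |3*x| ≤ 1 := by rw [abs_of_pos (by linarith)]; linarith
  have hs := Real.sin_bound hx3
  have hc := Real.cos_bound hx
  have hc3 := Real.cos_bound hx3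
  rw [abs_of_pos h0] at hc
  rw [abs_of_pos (by linarith : (0:ℝ) < 3*x)] at hs hc3
  have hcube : (Real.cos x)^3 = (Real.cos (3*x) + 3 * Real.cos x)/4 := by
    have := Real.cos_three_mul x; linarith
  rw [hcube]
  have hD : Real.sin (3*x) - 3*x*((Real.cos (3*x) + 3 * Real.cos x)/4)
      = (Real.sin (3*x) - (3*x - (3*x)^3/6))
        - (9*x/4) * (Real.cos x - (1 - x^2/2))
        - (3*x/4) * (Real.cos (3*x) - (1 - (3*x)^2/2)) := by ring
  rw [hD]
  have t1 : |(Real.sin (3*x) - (3*x - (3*x)^3/6))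
        - (9*x/4) * (Real.cos x - (1 - x^2/2))
        - (3*x/4) * (Real.cos (3*x) - (1 - (3*x)^2/2))|
      ≤ |Real.sin (3*x) - (3*x - (3*x)^3/6)|
        + |(9*x/4) * (Real.cos x - (1 - x^2/2))|
        + |(3*x/4) * (Real.cos (3*x) - (1 - (3*x)^2/2))| := by
    calc _ ≤ |(Real.sin (3*x) - (3*x - (3*x)^3/6))
        - (9*x/4) * (Real.cos x - (1 - x^2/2))|
        + |(3*x/4) * (Real.cos (3*x) - (1 - (3*x)^2/2))| := abs_sub _ _
      _ ≤ _ := by gcongr; exact abs_sub _ _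
  refine t1.trans ?_
  rw [abs_mul, abs_mul, abs_of_pos (by linarith : (0:ℝ) < 9*x/4),
    abs_of_pos (by linarith : (0:ℝ) < 3*x/4)]
  nlinarith [abs_nonneg (Real.cos x - (1 - x^2/2)), abs_nonneg (Real.cos (3*x) - (1 - (3*x)^2/2)),
    pow_pos h0 4, sq_nonneg x,
    mul_le_mul_of_nonneg_left hc (by linarith : (0:ℝ) ≤ 9*x/4),
    mul_le_mul_of_nonneg_left hc3 (by linarith : (0:ℝ) ≤ 3*x/4)]

lemma fid (x : ℝ) (hx : x ≠ 0) (hs : Real.sin x ≠ 0) (h34 : 3 - 4*(Real.sin x)^2 ≠ 0) :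
    (Real.pi/x) * ((1/2)*(Real.cot (3*x) - 3*Real.cot x) + 4/(3*x))
      = (4*Real.pi/3) * ((Real.sin (3*x) - 3*x*(Real.cos x)^3)
          / (x^2 * Real.sin x * (3 - 4*(Real.sin x)^2))) := by
  have hπ : Real.pi ≠ 0 := Real.pi_ne_zero
  rw [Real.cot_eq_cos_div_sin, Real.cot_eq_cos_div_sin, Real.sin_three_mul, Real.cos_three_mul]
  have hc3 : Real.cos x ^ 3 = (1 - Real.sin x ^ 2) * Real.cos x := by
    rw [pow_succ, Real.cos_sq']
  rw [hc3]
  have hs3 : (3:ℝ) * Real.sin x - 4 * Real.sin x ^ 3 ≠ 0 := by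
    have h : 3*Real.sin x - 4*Real.sin x^3 = Real.sin x * (3 - 4*Real.sin x^2) := by ring
    rw [h]; exact mul_ne_zero hs h34
  field_simp
  ring

lemma fbound' (x : ℝ) (h0 : 0 < x) (h1 : x ≤ 1/4) :
    |(Real.pi/x) * ((1/2)*(Real.cot (3*x) - 3*Real.cot x) + 4/(3*x))| ≤ 8*Real.pi*x := by
  have hπ := Real.pi_pos
  have hsx : Real.sin x ≤ x := (Real.sin_lt h0).le
  have hs_pos : 0 < Real.sin x := Real.sin_pos_of_pos_of_lt_pi h0 (by nlinarith [Real.pi_gt_three])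
  have hx2 : x^2 ≤ 1/16 := by nlinarith
  have hcube : x^3 ≤ x/16 := by nlinarith [mul_le_mul_of_nonneg_left hx2 h0.le]
  have hs_ge : x/2 ≤ Real.sin x := by
    have := Real.sin_gt_sub_cube h0
    nlinarith
  have hs2 : Real.sin x ^ 2 ≤ 1/16 := by nlinarith
  have h2 : (2:ℝ) ≤ 3 - 4*(Real.sin x)^2 := by nlinarith
  have h34 : (0:ℝ) < 3 - 4*(Real.sin x)^2 := by linarith
  rw [fid x h0.ne' hs_pos.ne' h34.ne']
  have hdenpos : 0 < x^2 * Real.sin x * (3 - 4*(Real.sin x)^2) := by positivity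
  have hden : x^3 ≤ x^2 * Real.sin x * (3 - 4*(Real.sin x)^2) := by
    calc x^3 = x^2 * (x/2) * 2 := by ring
      _ ≤ x^2 * Real.sin x * (3 - 4*(Real.sin x)^2) := by gcongr <;> positivity
  have hDb := Dbound x h0 h1
  rw [abs_mul, abs_of_pos (show (0:ℝ) < 4*Real.pi/3 by positivity), abs_div,
    abs_of_pos hdenpos]
  calc (4*Real.pi/3) * (|Real.sin (3*x) - 3*x*(Real.cos x)^3|
          / (x^2 * Real.sin x * (3 - 4*(Real.sin x)^2)))
      ≤ (4*Real.pi/3) * ((6*x^4) / x^3) := by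
        gcongr
    _ = 8*Real.pi*x := by field_simp; ring

lemma fbound (N : ℝ) (hN : 4*Real.pi ≤ N) :
    |N * ((1/2)*(Real.cot (3*Real.pi/N) - 3*Real.cot (Real.pi/N)) + 4*N/(3*Real.pi))|
      ≤ 8*Real.pi^2/N := by
  have hπ := Real.pi_pos
  have hN0 : 0 < N := by nlinarith
  have h0 : 0 < Real.pi/N := by positivity
  have h1 : Real.pi/N ≤ 1/4 := by rw [div_le_iff₀ hN0]; nlinarith
  have hE : N * ((1/2)*(Real.cot (3*Real.pi/N) - 3*Real.cot (Real.pi/N)) + 4*N/(3*Real.pi))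
      = (Real.pi/(Real.pi/N)) * ((1/2)*(Real.cot (3*(Real.pi/N)) - 3*Real.cot (Real.pi/N))
          + 4/(3*(Real.pi/N))) := by
    rw [show 3*Real.pi/N = 3*(Real.pi/N) from by ring]
    have harg : Real.pi/(Real.pi/N) = N := by field_simp
    rw [harg]
    have h43 : 4/(3*(Real.pi/N)) = 4*N/(3*Real.pi) := by
      field_simp
    rw [h43]
  have hfin : 8*Real.pi*(Real.pi/N) = 8*Real.pi^2/N := by field_simp
  rw [hE, ← hfin]
  exact fbound' (Real.pi/N) h0 h1

/-- **Vacuum value of the modified Hamiltonian `H[cos²]` and its asymptotics:**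
for every `L ≥ 1`, `−2 Σ_{m=1}^{L−1} sin³(mπ/L) = (1/2)(cot(3π/N) − 3cot(π/N))`
with `N = 2L`, and `(1/2)(cot(3π/N) − 3cot(π/N)) = −4N/(3π) + o(1/N)` as
`N → ∞`, i.e. `N·((1/2)(cot(3π/N) − 3cot(π/N)) + 4N/(3π)) → 0` (the `N`-linear
contribution cancels in this combination). -/
theorem gl11_Hcos2_vacuum_value :
    (∀ L : ℕ, 1 ≤ L →
      -2 * ∑ m ∈ Finset.Ico 1 L, (Real.sin (m * Real.pi / L)) ^ 3 =
        (1/2) * (Real.cot (3 * Real.pi / (2 * L)) - 3 * Real.cot (Real.pi / (2 * L)))) ∧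
    Tendsto (fun N : ℝ =>
        N * ((1/2) * (Real.cot (3 * Real.pi / N) - 3 * Real.cot (Real.pi / N))
          + 4 * N / (3 * Real.pi)))
      atTop (nhds 0) := by
  constructor
  · exact part1
  · refine squeeze_zero_norm' (a := fun N => 8*Real.pi^2/N) ?_ ?_
    · filter_upwards [eventually_ge_atTop (4*Real.pi)] with N hN
      simpa only [Real.norm_eq_abs] using fbound N hN
    · exact tendsto_const_nhds.div_atTop tendsto_id
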